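/- Fix θ ∈ ℝ^p with θ_j ≠ 0 for all j, λ > 0, γ ∈ [0,2], and a positive integer n_e. Let (e_{ij})_{1≤i≤n_e, 1≤j≤p} be a jointly independent family of real Gaussian random variables with e_{ij} ~ N(0, λ|θ_j|^{−γ}). Then the PANDA expected penalty satisfies E[ ∑_{i=1}^{n_e} ( ∑_{j=1}^p θ_j e_{ij} )² ] = λ n_e ∑_{j=1}^p |θ_j|^{2−γ}, i.e. the bridge (l_{2−γ}) penalty, which is the l_0 penalty for γ = 2, the lasso penalty for γ = 1, and the ridge penalty for γ = 0. -/

import Mathlib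

open MeasureTheory ProbabilityTheory Real Set Filter
open scoped ProbabilityTheory NNReal ENNReal

lemma aux_integral_mul_exp {b : ℝ} (hb : 0 < b) :
    ∫ x : ℝ, x * Real.exp (-b * x ^ 2) = 0 := by
  have hint : Integrable (fun x : ℝ => x * Real.exp (-b * x ^ 2)) :=
    integrable_mul_exp_neg_mul_sq hb
  have h : (∫ x in Ioi (0:ℝ), (-x) * Real.exp (-b * (-x) ^ 2))
      = ∫ x in Iic (0:ℝ), x * Real.exp (-b * x ^ 2) := by
    have h0 := integral_comp_neg_Ioi (0:ℝ) (fun x => x * Real.exp (-b * x ^ 2))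
    rwa [neg_zero] at h0
  have h2 : (∫ x in Ioi (0:ℝ), -(x * Real.exp (-b * x ^ 2)))
      = ∫ x in Ioi (0:ℝ), (-x) * Real.exp (-b * (-x) ^ 2) :=
    setIntegral_congr_fun measurableSet_Ioi (fun x _ => by rw [neg_sq]; ring)
  have h1 : (∫ x in Iic (0:ℝ), x * Real.exp (-b * x ^ 2))
      = - ∫ x in Ioi (0:ℝ), x * Real.exp (-b * x ^ 2) := by
    rw [← h, ← h2, integral_neg]
  rw [← intervalIntegral.integral_Iic_add_Ioi (b := (0:ℝ)) hint.integrableOn hint.integrableOn, h1]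
  ring

lemma aux_integrable_sq_mul_exp {b : ℝ} (hb : 0 < b) :
    Integrable (fun x : ℝ => x ^ 2 * Real.exp (-b * x ^ 2)) := by
  have := integrable_rpow_mul_exp_neg_mul_sq hb (s := 2) (by norm_num)
  simpa [Real.rpow_two] using this

lemma aux_tendsto_mul_exp {b : ℝ} (hb : 0 < b) :
    Tendsto (fun x : ℝ => x * Real.exp (-b * x ^ 2)) atTop (nhds 0) := by
  have h := (rpow_mul_exp_neg_mul_sq_isLittleO_exp_neg hb 1).isBigO
  simp only [Real.rpow_one] at h
  refine h.trans_tendsto ?_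
  have : Tendsto (fun x : ℝ => -(1/2) * x) atTop atBot :=
    Tendsto.const_mul_atTop_of_neg (by norm_num) tendsto_id
  exact Real.tendsto_exp_atBot.comp this

lemma aux_integral_sq_mul_exp_Ioi {b : ℝ} (hb : 0 < b) :
    ∫ x in Ioi (0:ℝ), x ^ 2 * Real.exp (-b * x ^ 2) = Real.sqrt (π / b) / (4 * b) := by
  set c : ℝ := (2 * b)⁻¹ with hc
  have hbne : (2 : ℝ) * b ≠ 0 := by positivity
  have hF : ∀ x : ℝ, HasDerivAt (fun y : ℝ => -c * (y * Real.exp (-b * y ^ 2)))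
      (x ^ 2 * Real.exp (-b * x ^ 2) - c * Real.exp (-b * x ^ 2)) x := by
    intro x
    have h1 : HasDerivAt (fun y : ℝ => -b * y ^ 2) (-b * (2 * x)) x := by
      simpa [mul_comm] using ((hasDerivAt_pow 2 x).const_mul (-b))
    have h2 := h1.exp
    have h3 := (hasDerivAt_id x).fun_mul h2
    have h4 := h3.const_mul (-c)
    refine h4.congr_deriv ?_
    simp only [id_eq, one_mul]
    rw [hc]
    field_simp
    ring
  have hint : IntegrableOn
      (fun x : ℝ => x ^ 2 * Real.exp (-b * x ^ 2) - c * Real.exp (-b * x ^ 2)) (Ioi 0) :=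
    ((aux_integrable_sq_mul_exp hb).sub
      ((integrable_exp_neg_mul_sq hb).const_mul c)).integrableOn
  have htend : Tendsto (fun y : ℝ => -c * (y * Real.exp (-b * y ^ 2))) atTop (nhds 0) := by
    have := (aux_tendsto_mul_exp hb).const_mul (-c)
    simpa using this
  have key := integral_Ioi_of_hasDerivAt_of_tendsto
    (f := fun y : ℝ => -c * (y * Real.exp (-b * y ^ 2)))
    (a := 0) ((hF 0).continuousAt.continuousWithinAt)
    (fun x _ => hF x) hint htend
  simp only [mul_zero, zero_mul, sub_zero, neg_zero] at key
  have hsplit : (∫ x in Ioi (0:ℝ), (x ^ 2 * Real.exp (-b * x ^ 2) - c * Real.exp (-b * x ^ 2)))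
      = (∫ x in Ioi (0:ℝ), x ^ 2 * Real.exp (-b * x ^ 2))
        - ∫ x in Ioi (0:ℝ), c * Real.exp (-b * x ^ 2) := by
    exact integral_sub (aux_integrable_sq_mul_exp hb).integrableOn
      ((integrable_exp_neg_mul_sq hb).const_mul c).integrableOn
  rw [hsplit] at key
  have hval : (∫ x in Ioi (0:ℝ), c * Real.exp (-b * x ^ 2)) = c * (Real.sqrt (π / b) / 2) := by
    rw [MeasureTheory.integral_const_mul, integral_gaussian_Ioi]
  have : (∫ x in Ioi (0:ℝ), x ^ 2 * Real.exp (-b * x ^ 2)) = c * (Real.sqrt (π / b) / 2) := by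
    have h0 : (0:ℝ) - -c * (0 * Real.exp (-b * 0 ^ 2)) = 0 := by ring
    rw [hval] at key
    linarith [key]
  rw [this, hc]
  rw [eq_div_iff (by positivity : (4:ℝ) * b ≠ 0)]
  field_simp
  ring

lemma aux_integral_sq_mul_exp {b : ℝ} (hb : 0 < b) :
    ∫ x : ℝ, x ^ 2 * Real.exp (-b * x ^ 2) = Real.sqrt (π / b) / (2 * b) := by
  have hint := aux_integrable_sq_mul_exp hb
  have h : (∫ x in Ioi (0:ℝ), (-x) ^ 2 * Real.exp (-b * (-x) ^ 2))
      = ∫ x in Iic (0:ℝ), x ^ 2 * Real.exp (-b * x ^ 2) := by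
    have h0 := integral_comp_neg_Ioi (0:ℝ) (fun x => x ^ 2 * Real.exp (-b * x ^ 2))
    rwa [neg_zero] at h0
  have h1 : (∫ x in Iic (0:ℝ), x ^ 2 * Real.exp (-b * x ^ 2))
      = ∫ x in Ioi (0:ℝ), x ^ 2 * Real.exp (-b * x ^ 2) := by
    rw [← h]
    exact setIntegral_congr_fun measurableSet_Ioi (fun x _ => by rw [neg_sq])
  rw [← intervalIntegral.integral_Iic_add_Ioi (b := (0:ℝ)) hint.integrableOn hint.integrableOn,
    h1, aux_integral_sq_mul_exp_Ioi hb]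
  rw [← add_div, div_eq_div_iff (by positivity) (by positivity)]
  ring


lemma aux_pdf_eq (v : ℝ≥0) (x : ℝ) :
    gaussianPDFReal 0 v x
      = (Real.sqrt (2 * π * v))⁻¹ * Real.exp (-(2 * (v:ℝ))⁻¹ * x ^ 2) := by
  unfold gaussianPDFReal
  congr 1
  congr 1
  ring

lemma aux_integral_gaussianReal {v : ℝ≥0} (hv : v ≠ 0) (g : ℝ → ℝ) :
    ∫ x, g x ∂(gaussianReal 0 v) = ∫ x, gaussianPDFReal 0 v x * g x := by
  rw [gaussianReal_of_var_ne_zero _ hv]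
  have hd : gaussianPDF 0 v
      = fun x => (((gaussianPDFReal 0 v x).toNNReal : ℝ≥0) : ℝ≥0∞) := rfl
  rw [hd, integral_withDensity_eq_integral_smul
    ((measurable_gaussianPDFReal 0 v).real_toNNReal) g]
  congr 1 with x
  rw [NNReal.smul_def, Real.coe_toNNReal _ (gaussianPDFReal_nonneg 0 v x), smul_eq_mul]

lemma aux_integrable_gaussianReal {v : ℝ≥0} (hv : v ≠ 0) {g : ℝ → ℝ}
    (hg : Integrable (fun x => gaussianPDFReal 0 v x * g x)) :
    Integrable g (gaussianReal 0 v) := by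
  rw [gaussianReal_of_var_ne_zero _ hv]
  have hd : gaussianPDF 0 v
      = fun x => (((gaussianPDFReal 0 v x).toNNReal : ℝ≥0) : ℝ≥0∞) := rfl
  rw [hd, integrable_withDensity_iff_integrable_coe_smul
    ((measurable_gaussianPDFReal 0 v).real_toNNReal)]
  refine hg.congr (Filter.Eventually.of_forall fun x => ?_)
  simp only [smul_eq_mul]
  rw [Real.coe_toNNReal _ (gaussianPDFReal_nonneg 0 v x)]

lemma aux_vpos {v : ℝ≥0} (hv : v ≠ 0) : 0 < (v : ℝ) := by
  exact_mod_cast (zero_lt_iff.mpr hv)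

lemma aux_integrable_id_gaussianReal {v : ℝ≥0} (hv : v ≠ 0) :
    Integrable (fun x : ℝ => x) (gaussianReal 0 v) := by
  have hb : 0 < (2 * (v:ℝ))⁻¹ := by
    have := aux_vpos hv; positivity
  refine aux_integrable_gaussianReal hv ?_
  have : (fun x : ℝ => gaussianPDFReal 0 v x * x)
      = fun x => (Real.sqrt (2*π*v))⁻¹ * (x * Real.exp (-(2*(v:ℝ))⁻¹ * x^2)) := by
    funext x; rw [aux_pdf_eq]; ring
  rw [this]
  exact (integrable_mul_exp_neg_mul_sq hb).const_mul _

lemma aux_integrable_sq_gaussianReal {v : ℝ≥0} (hv : v ≠ 0) :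
    Integrable (fun x : ℝ => x ^ 2) (gaussianReal 0 v) := by
  have hb : 0 < (2 * (v:ℝ))⁻¹ := by
    have := aux_vpos hv; positivity
  refine aux_integrable_gaussianReal hv ?_
  have : (fun x : ℝ => gaussianPDFReal 0 v x * x ^ 2)
      = fun x => (Real.sqrt (2*π*v))⁻¹ * (x ^ 2 * Real.exp (-(2*(v:ℝ))⁻¹ * x^2)) := by
    funext x; rw [aux_pdf_eq]; ring
  rw [this]
  exact (aux_integrable_sq_mul_exp hb).const_mul _

lemma aux_integral_id_gaussianReal {v : ℝ≥0} (hv : v ≠ 0) :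
    ∫ x, x ∂(gaussianReal 0 v) = 0 := by
  have hb : 0 < (2 * (v:ℝ))⁻¹ := by
    have := aux_vpos hv; positivity
  rw [aux_integral_gaussianReal hv]
  have : (fun x : ℝ => gaussianPDFReal 0 v x * x)
      = fun x => (Real.sqrt (2*π*v))⁻¹ * (x * Real.exp (-(2*(v:ℝ))⁻¹ * x^2)) := by
    funext x; rw [aux_pdf_eq]; ring
  rw [this, MeasureTheory.integral_const_mul, aux_integral_mul_exp hb, mul_zero]

lemma aux_integral_sq_gaussianReal {v : ℝ≥0} (hv : v ≠ 0) :
    ∫ x, x ^ 2 ∂(gaussianReal 0 v) = (v : ℝ) := by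
  have hvp := aux_vpos hv
  have hb : 0 < (2 * (v:ℝ))⁻¹ := by positivity
  rw [aux_integral_gaussianReal hv]
  have : (fun x : ℝ => gaussianPDFReal 0 v x * x ^ 2)
      = fun x => (Real.sqrt (2*π*v))⁻¹ * (x ^ 2 * Real.exp (-(2*(v:ℝ))⁻¹ * x^2)) := by
    funext x; rw [aux_pdf_eq]; ring
  rw [this, MeasureTheory.integral_const_mul, aux_integral_sq_mul_exp hb]
  have harg : π / (2 * (v:ℝ))⁻¹ = 2 * π * v := by field_simp
  rw [harg]
  have hs : (0:ℝ) < Real.sqrt (2 * π * v) := by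
    apply Real.sqrt_pos.mpr; positivity
  field_simp



/-- Bridge row of Table 1: with bridge-type Gaussian noise
e_{ij} ~ N(0, λ|θ_j|^{−γ}), the expected PANDA penalty is the bridge
penalty λ n_e ∑_j |θ_j|^{2−γ}. -/
theorem stmt_4 {Ω : Type*} [MeasureSpace Ω] [IsProbabilityMeasure (ℙ : Measure Ω)]
    {p nE : ℕ} (hnE : 0 < nE) (θ : Fin p → ℝ) (hθ : ∀ j, θ j ≠ 0)
    (lam γ : ℝ) (hlam : 0 < lam) (hγ0 : 0 ≤ γ) (hγ2 : γ ≤ 2)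
    (e : Fin nE → Fin p → Ω → ℝ) (hmeas : ∀ i j, Measurable (e i j))
    (hindep : iIndepFun
      (fun ij : Fin nE × Fin p => e ij.1 ij.2) ℙ)
    (v : Fin p → ℝ≥0) (hv : ∀ j, (v j : ℝ) = lam * |θ j| ^ (-γ))
    (hgauss : ∀ i j, Measure.map (e i j) ℙ = gaussianReal 0 (v j)) :
    (∫ ω, ∑ i, (∑ j, θ j * e i j ω) ^ 2 ∂ℙ)
      = lam * nE * ∑ j, |θ j| ^ (2 - γ) := by
  have hvne : ∀ j, v j ≠ 0 := by
    intro j h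
    have h1 : (0:ℝ) < lam * |θ j| ^ (-γ) := by
      have : 0 < |θ j| := abs_pos.mpr (hθ j)
      positivity
    rw [← hv j, h] at h1
    simp at h1
  have I1 : ∀ i j, Integrable (e i j) ℙ := by
    intro i j
    exact (integrable_map_measure (μ := ℙ) (f := e i j) (g := fun x : ℝ => x)
        (by rw [hgauss i j]; exact aestronglyMeasurable_id)
        (hmeas i j).aemeasurable).mp
      (by rw [hgauss i j]; exact aux_integrable_id_gaussianReal (hvne j))
  have I2 : ∀ i j, Integrable (fun ω => e i j ω ^ 2) ℙ := by
    intro i j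
    exact (integrable_map_measure (μ := ℙ) (f := e i j) (g := fun x : ℝ => x ^ 2)
        (by rw [hgauss i j]; exact (measurable_id.pow_const 2).aestronglyMeasurable)
        (hmeas i j).aemeasurable).mp
      (by rw [hgauss i j]; exact aux_integrable_sq_gaussianReal (hvne j))
  have E1 : ∀ i j, (∫ ω, e i j ω ∂ℙ) = 0 := by
    intro i j
    have h := integral_map (μ := ℙ) (φ := e i j) (f := fun x : ℝ => x)
      (hmeas i j).aemeasurable (by rw [hgauss i j]; exact aestronglyMeasurable_id)
    rw [hgauss i j, aux_integral_id_gaussianReal (hvne j)] at h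
    exact h.symm
  have E2 : ∀ i j, (∫ ω, e i j ω ^ 2 ∂ℙ) = (v j : ℝ) := by
    intro i j
    have h := integral_map (μ := ℙ) (φ := e i j) (f := fun x : ℝ => x ^ 2)
      (hmeas i j).aemeasurable
      (by rw [hgauss i j]; exact (measurable_id.pow_const 2).aestronglyMeasurable)
    rw [hgauss i j, aux_integral_sq_gaussianReal (hvne j)] at h
    exact h.symm
  have hIF : ∀ (i : Fin nE) (j k : Fin p), j ≠ k → IndepFun (e i j) (e i k) ℙ := by
    intro i j k hjk
    exact hindep.indepFun (i := (i, j)) (j := (i, k)) (by simp [Prod.ext_iff, hjk])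
  have Iprod : ∀ (i : Fin nE) (j k : Fin p), Integrable (fun ω => e i j ω * e i k ω) ℙ := by
    intro i j k
    by_cases hjk : j = k
    · subst hjk; simpa [pow_two] using I2 i j
    · exact (hIF i j k hjk).integrable_mul (I1 i j) (I1 i k)
  have hexpand : ∀ (i : Fin nE) (ω : Ω), (∑ j, θ j * e i j ω) ^ 2
      = ∑ j, ∑ k, θ j * θ k * (e i j ω * e i k ω) := by
    intro i ω
    rw [sq, Finset.sum_mul_sum]
    exact Finset.sum_congr rfl fun j _ => Finset.sum_congr rfl fun k _ => by ring
  simp_rw [hexpand]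
  rw [integral_finset_sum _ fun i _ => integrable_finset_sum _ fun j _ =>
    integrable_finset_sum _ fun k _ => (Iprod i j k).const_mul _]
  have key : ∀ i : Fin nE, (∫ ω, ∑ j, ∑ k, θ j * θ k * (e i j ω * e i k ω) ∂ℙ)
      = ∑ j, lam * |θ j| ^ (2 - γ) := by
    intro i
    rw [integral_finset_sum _ fun j _ =>
      integrable_finset_sum _ fun k _ => (Iprod i j k).const_mul _]
    refine Finset.sum_congr rfl fun j _ => ?_
    rw [integral_finset_sum _ fun k _ => (Iprod i j k).const_mul _]
    have hterm : ∀ k : Fin p, (∫ ω, θ j * θ k * (e i j ω * e i k ω) ∂ℙ)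
        = if k = j then lam * |θ j| ^ (2 - γ) else 0 := by
      intro k
      rw [MeasureTheory.integral_const_mul]
      by_cases hk : k = j
      · subst hk
        have h2 : (∫ ω, e i k ω * e i k ω ∂ℙ) = (v k : ℝ) := by
          simpa [pow_two] using E2 i k
        rw [if_pos rfl, h2, hv k]
        have hpos : 0 < |θ k| := abs_pos.mpr (hθ k)
        have : |θ k| ^ (2 - γ) = |θ k| ^ (2:ℝ) * |θ k| ^ (-γ) := by
          rw [← Real.rpow_add hpos]; ring_nf
        rw [this, Real.rpow_two, sq_abs]
        ring
      · rw [if_neg hk]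
        have hmm : (∫ a, e i j a * e i k a ∂ℙ)
            = (∫ a, e i j a ∂ℙ) * ∫ a, e i k a ∂ℙ :=
          (hIF i j k (Ne.symm hk)).integral_fun_mul_eq_mul_integral (I1 i j).aestronglyMeasurable (I1 i k).aestronglyMeasurable
        rw [hmm, E1 i j]
        ring
    simp_rw [hterm]
    simp
  simp_rw [key]
  rw [Finset.sum_const, Finset.card_univ, Fintype.card_fin, nsmul_eq_mul,
    ← Finset.mul_sum]
  ring
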